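/- Fix γ > 1, set β := (γ−1)^{−1}, and fix 0 < α < β. Let (X_m)_{m∈ℤ}, the illuminated sites, Θ_k, and θ^stripe be as in the long-range model. Let δ : (0,∞) → (0,∞) satisfy lim_{ε→0} δ(ε)/ε = 0 and liminf_{ε→0} ε^{−γ} δ(ε) > 0. Then for every c > 0 and every M ≥ 1, with probability one there exists ε₀ > 0 such that for every 0 < ε < ε₀ there is a point S ∈ [−c, c] with [S − Mε, S + Mε] ⊆ [−c, c] and θ^stripe(δ(ε)^{−1} s) = 1 for every s ∈ [S − Mε, S + Mε]. -/

import Mathlib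

open MeasureTheory ProbabilityTheory Filter Topology
open scoped ENNReal

/-- The normalizing constant `Z_α = Σ_{k ≠ 0} |k|^{-(2+α)}` of the heavy-tailed law. -/
noncomputable def Zalpha (α : ℝ) : ℝ :=
  ∑' k : ℤ, if k = 0 then 0 else |(k : ℝ)| ^ (-(2 + α))

/-- A site `k ∈ ℤ` is illuminated (for the configuration `ω`) if some lamp `m`
has brightness `X m ω ≥ |m - k|`. -/
def Illuminated {Ω : Type*} (X : ℤ → Ω → ℤ) (k : ℤ) (ω : Ω) : Prop :=
  ∃ m : ℤ, |m - k| ≤ X m ω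

/-- The field `Θ_k`: equal to `1` on illuminated sites and `2` otherwise. -/
noncomputable def ThetaSite {Ω : Type*} (X : ℤ → Ω → ℤ) (k : ℤ) (ω : Ω) : ℝ :=
  haveI := Classical.propDecidable (Illuminated X k ω)
  if Illuminated X k ω then 1 else 2

/-- The random step function `θ^stripe(x) = Θ_{⌊x⌋}`. -/
noncomputable def thetaStripe {Ω : Type*} (X : ℤ → Ω → ℤ) (x : ℝ) (ω : Ω) : ℝ :=
  ThetaSite X ⌊x⌋ ω

set_option maxHeartbeats 1000000 in
/-- **Proposition 6.1 (random stripes).** Fix `γ > 1`, `β = (γ-1)⁻¹` and `0 < α < β`.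
If the microscopic scale `δ(ε)` satisfies `δ(ε)/ε → 0` and `liminf_{ε→0} ε^{-γ} δ(ε) > 0`,
then for every `c > 0` and `M ≥ 1`, almost surely, for all sufficiently small `ε > 0` there
is a point `S ∈ [-c, c]` with `[S - Mε, S + Mε] ⊆ [-c, c]` on which the blown-up stripe field
`θ^stripe(δ(ε)⁻¹ ·)` is identically `1`. -/
theorem random_stripes {Ω : Type*} [MeasurableSpace Ω] (μ : Measure Ω) [IsProbabilityMeasure μ]
    (γ β α : ℝ) (hγ : 1 < γ) (hβ : β = (γ - 1)⁻¹) (hα0 : 0 < α) (hαβ : α < β)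
    (X : ℤ → Ω → ℤ) (hXm : ∀ m, Measurable (X m))
    (hindep : iIndepFun X μ)
    (hident : ∀ m : ℤ, IdentDistrib (X m) (X 0) μ μ)
    (hlaw : ∀ k : ℤ, k ≠ 0 →
      μ {ω | X 0 ω = k} = ENNReal.ofReal ((Zalpha α)⁻¹ * |(k : ℝ)| ^ (-(2 + α))))
    (hlaw0 : μ {ω | X 0 ω = 0} = 0)
    (δ : ℝ → ℝ) (hδpos : ∀ ε > (0 : ℝ), 0 < δ ε)
    (hδsmall : Tendsto (fun ε => δ ε / ε) (𝓝[>] (0 : ℝ)) (𝓝 0))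
    (hδlow : ∃ c₀ > (0 : ℝ), ∀ᶠ ε in 𝓝[>] (0 : ℝ), c₀ ≤ ε ^ (-γ) * δ ε)
    (c : ℝ) (hc : 0 < c) (M : ℝ) (hM : 1 ≤ M) :
    ∀ᵐ ω ∂μ, ∃ ε₀ > (0 : ℝ), ∀ ε : ℝ, 0 < ε → ε < ε₀ →
      ∃ S : ℝ, S ∈ Set.Icc (-c) c ∧
        Set.Icc (S - M * ε) (S + M * ε) ⊆ Set.Icc (-c) c ∧
        ∀ s ∈ Set.Icc (S - M * ε) (S + M * ε), thetaStripe X ((δ ε)⁻¹ * s) ω = 1 := by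
  obtain ⟨c₀, hc₀, hlow⟩ := hδlow
  have hβ0 : 0 < β := hα0.trans hαβ
  have hγ1 : γ - 1 ≠ 0 := by linarith
  have hγβ : γ * β = 1 + β := by
    rw [hβ]; field_simp; ring
  have hM0 : 0 < M := lt_of_lt_of_le one_pos hM
  -- positivity of the normalizing constant's inverse
  have hZinv : 0 < (Zalpha α)⁻¹ := by
    by_contra h
    push_neg at h
    have hall : ∀ k : ℤ, μ {ω | X 0 ω = k} = 0 := by
      intro k
      rcases eq_or_ne k 0 with rfl | hk
      · exact hlaw0
      · rw [hlaw k hk, ENNReal.ofReal_eq_zero]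
        exact mul_nonpos_of_nonpos_of_nonneg h (Real.rpow_nonneg (abs_nonneg _) _)
    have huniv : (Set.univ : Set Ω) ⊆ ⋃ k : ℤ, {ω | X 0 ω = k} := fun ω _ =>
      Set.mem_iUnion.2 ⟨X 0 ω, rfl⟩
    have : (1 : ℝ≥0∞) ≤ 0 := by
      calc (1 : ℝ≥0∞) = μ Set.univ := (measure_univ).symm
        _ ≤ μ (⋃ k : ℤ, {ω | X 0 ω = k}) := measure_mono huniv
        _ ≤ ∑' k : ℤ, μ {ω | X 0 ω = k} := measure_iUnion_le _
        _ = 0 := by simp [hall]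
    simp at this
  -- constants
  set C₃ : ℝ := c * c₀ ^ β / (4 * (4 * M) ^ (1 + β)) with hC₃def
  have hC₃ : 0 < C₃ := by positivity
  set c₁ : ℝ := (Zalpha α)⁻¹ * 2 ^ (-(2 + α)) with hc₁def
  have hc₁ : 0 < c₁ := by positivity
  -- lamp ranges and failure events
  set N : ℕ → ℕ := fun L => ⌈C₃ * (L : ℝ) ^ (1 + β)⌉₊ with hNdef
  set F : ℕ → Set Ω := fun L => ⋂ m ∈ Finset.Icc (0 : ℤ) ((N L : ℤ)), X m ⁻¹' Set.Iio (L : ℤ)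
    with hFdef
  -- tail lower bound
  have htail : ∀ L : ℕ, 1 ≤ L →
      ENNReal.ofReal (c₁ * (L : ℝ) ^ (-(1 + α))) ≤ μ (X 0 ⁻¹' Set.Ici (L : ℤ)) := by
    intro L hL
    have hL0 : (0 : ℝ) < (L : ℝ) := by exact_mod_cast hL
    set T : Finset ℤ := Finset.Icc (L : ℤ) (2 * L) with hTdef
    have hsubU : (⋃ k ∈ T, X 0 ⁻¹' {k}) ⊆ X 0 ⁻¹' Set.Ici (L : ℤ) := by
      intro ω hmem
      simp only [Set.mem_iUnion, Set.mem_preimage, Set.mem_singleton_iff] at hmem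
      obtain ⟨k, hk, hXk⟩ := hmem
      rw [hTdef, Finset.mem_Icc] at hk
      simp only [Set.mem_preimage, Set.mem_Ici, hXk]
      exact hk.1
    have hdisj : (T : Set ℤ).PairwiseDisjoint (fun k => X 0 ⁻¹' {k}) := by
      intro a _ b _ hab
      simp only [Function.onFun, Set.disjoint_left, Set.mem_preimage,
        Set.mem_singleton_iff]
      intro ω h1 h2
      exact hab (h1 ▸ h2 ▸ rfl)
    have hmeas : ∀ k ∈ T, MeasurableSet (X 0 ⁻¹' {k}) := fun k _ =>
      (hXm 0) MeasurableSpace.measurableSet_top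
    have hunion : μ (⋃ k ∈ T, X 0 ⁻¹' {k}) = ∑ k ∈ T, μ (X 0 ⁻¹' {k}) :=
      measure_biUnion_finset hdisj hmeas
    have hterm : ∀ k ∈ T,
        ENNReal.ofReal ((Zalpha α)⁻¹ * (2 * (L : ℝ)) ^ (-(2 + α))) ≤ μ (X 0 ⁻¹' {k}) := by
      intro k hk
      rw [hTdef, Finset.mem_Icc] at hk
      have hk1 : (1 : ℤ) ≤ k := le_trans (by exact_mod_cast hL) hk.1
      have hkne : k ≠ 0 := by omega
      have hset : X 0 ⁻¹' {k} = {ω | X 0 ω = k} := rfl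
      rw [hset, hlaw k hkne]
      apply ENNReal.ofReal_le_ofReal
      apply mul_le_mul_of_nonneg_left _ hZinv.le
      have hkpos : (0 : ℝ) < (k : ℝ) := by exact_mod_cast hk1
      rw [abs_of_pos hkpos]
      apply Real.rpow_le_rpow_of_nonpos hkpos _ (by linarith)
      have : (k : ℝ) ≤ ((2 * L : ℤ) : ℝ) := by exact_mod_cast hk.2
      push_cast at this ⊢
      linarith
    have hcardT : T.card = L + 1 := by
      rw [hTdef, Int.card_Icc]; omega
    have hsumlb : (T.card) • ENNReal.ofReal ((Zalpha α)⁻¹ * (2 * (L : ℝ)) ^ (-(2 + α))) ≤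
        ∑ k ∈ T, μ (X 0 ⁻¹' {k}) := Finset.card_nsmul_le_sum T _ _ hterm
    have halg : c₁ * (L : ℝ) ^ (-(1 + α)) =
        (L : ℝ) * ((Zalpha α)⁻¹ * (2 * (L : ℝ)) ^ (-(2 + α))) := by
      rw [Real.mul_rpow (by norm_num) hL0.le, hc₁def]
      rw [show (-(1 + α)) = 1 + (-(2 + α)) by ring, Real.rpow_add hL0, Real.rpow_one]
      ring
    calc ENNReal.ofReal (c₁ * (L : ℝ) ^ (-(1 + α)))
        = ENNReal.ofReal ((L : ℝ)) *
          ENNReal.ofReal ((Zalpha α)⁻¹ * (2 * (L : ℝ)) ^ (-(2 + α))) := by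
          rw [halg, ENNReal.ofReal_mul hL0.le]
      _ ≤ ((L + 1 : ℕ) : ℝ≥0∞) *
          ENNReal.ofReal ((Zalpha α)⁻¹ * (2 * (L : ℝ)) ^ (-(2 + α))) := by
          apply mul_le_mul_left
          rw [ENNReal.ofReal_natCast]
          exact_mod_cast Nat.cast_le.2 (by omega : L ≤ L + 1)
      _ = (T.card) • ENNReal.ofReal ((Zalpha α)⁻¹ * (2 * (L : ℝ)) ^ (-(2 + α))) := by
          rw [hcardT, nsmul_eq_mul]
      _ ≤ ∑ k ∈ T, μ (X 0 ⁻¹' {k}) := hsumlb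
      _ = μ (⋃ k ∈ T, X 0 ⁻¹' {k}) := hunion.symm
      _ ≤ μ (X 0 ⁻¹' Set.Ici (L : ℤ)) := measure_mono hsubU
  -- single-site upper bound
  have hsite : ∀ L : ℕ, 1 ≤ L →
      μ (X 0 ⁻¹' Set.Iio (L : ℤ)) ≤
        ENNReal.ofReal (1 - min (c₁ * (L : ℝ) ^ (-(1 + α))) 1) := by
    intro L hL
    have hmin0 : 0 ≤ min (c₁ * (L : ℝ) ^ (-(1 + α))) 1 := le_min (by positivity) zero_le_one
    have hcompl : X 0 ⁻¹' Set.Iio (L : ℤ) = (X 0 ⁻¹' Set.Ici (L : ℤ))ᶜ := by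
      rw [← Set.preimage_compl, Set.compl_Ici]
    rw [hcompl, measure_compl ((hXm 0) MeasurableSpace.measurableSet_top)
      (measure_ne_top μ _), measure_univ]
    have h1 : ENNReal.ofReal (min (c₁ * (L : ℝ) ^ (-(1 + α))) 1) ≤
        μ (X 0 ⁻¹' Set.Ici (L : ℤ)) :=
      le_trans (ENNReal.ofReal_le_ofReal (min_le_left _ _)) (htail L hL)
    calc (1 : ℝ≥0∞) - μ (X 0 ⁻¹' Set.Ici (L : ℤ))
        ≤ 1 - ENNReal.ofReal (min (c₁ * (L : ℝ) ^ (-(1 + α))) 1) := tsub_le_tsub_left h1 1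
      _ = ENNReal.ofReal (1 - min (c₁ * (L : ℝ) ^ (-(1 + α))) 1) := by
          rw [ENNReal.ofReal_sub 1 hmin0, ENNReal.ofReal_one]
  -- product bound on failure probability
  set r : ℕ → ℝ := fun L => min (c₁ * (L : ℝ) ^ (-(1 + α))) 1 with hrdef
  have hr0 : ∀ L, 0 ≤ r L := fun L => le_min (by positivity) zero_le_one
  have hr1 : ∀ L, r L ≤ 1 := fun L => min_le_right _ _
  set g : ℕ → ℝ := fun L => Real.exp (-(r L * (N L + 1))) with hgdef
  have hFg : ∀ L : ℕ, μ (F L) ≤ ENNReal.ofReal (g L) := by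
    intro L
    rcases Nat.eq_zero_or_pos L with rfl | hL
    · have hg0 : g 0 = 1 := by
        have hne : -(1 + α) ≠ 0 := by intro h; linarith
        simp only [hgdef, hrdef, Nat.cast_zero, Real.zero_rpow hne, mul_zero]
        norm_num
      rw [hg0, ENNReal.ofReal_one]
      exact prob_le_one
    · have hprod : μ (F L) = ∏ m ∈ Finset.Icc (0 : ℤ) ((N L : ℤ)),
          μ (X m ⁻¹' Set.Iio (L : ℤ)) := by
        rw [hFdef]
        exact hindep.meas_biInter
          (fun i _ => ⟨Set.Iio (L : ℤ), MeasurableSpace.measurableSet_top, rfl⟩)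
      have hident' : ∀ m : ℤ, μ (X m ⁻¹' Set.Iio (L : ℤ)) = μ (X 0 ⁻¹' Set.Iio (L : ℤ)) :=
        fun m => (hident m).measure_mem_eq MeasurableSpace.measurableSet_top
      have hcard : (Finset.Icc (0 : ℤ) ((N L : ℤ))).card = N L + 1 := by
        rw [Int.card_Icc]; omega
      have hpow : μ (F L) = μ (X 0 ⁻¹' Set.Iio (L : ℤ)) ^ (N L + 1) := by
        rw [hprod, Finset.prod_congr rfl (fun m _ => hident' m), Finset.prod_const, hcard]
      have hrL1 : r L ≤ 1 := hr1 L
      have hrL0 : 0 ≤ r L := hr0 L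
      have hreal : (1 - r L) ^ (N L + 1) ≤ Real.exp (-(r L * (N L + 1))) := by
        have h1 : 1 - r L ≤ Real.exp (-(r L)) := by
          have := Real.add_one_le_exp (-(r L)); linarith
        have h2 : (1 - r L) ^ (N L + 1) ≤ Real.exp (-(r L)) ^ (N L + 1) :=
          pow_le_pow_left₀ (by linarith) h1 _
        calc (1 - r L) ^ (N L + 1) ≤ Real.exp (-(r L)) ^ (N L + 1) := h2
          _ = Real.exp (-(r L * (N L + 1))) := by
              rw [← Real.exp_nat_mul]; congr 1; push_cast; ring
      calc μ (F L) = μ (X 0 ⁻¹' Set.Iio (L : ℤ)) ^ (N L + 1) := hpow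
        _ ≤ (ENNReal.ofReal (1 - r L)) ^ (N L + 1) :=
            pow_le_pow_left' (hsite L hL) _
        _ = ENNReal.ofReal ((1 - r L) ^ (N L + 1)) :=
            (ENNReal.ofReal_pow (by linarith) _).symm
        _ ≤ ENNReal.ofReal (g L) := ENNReal.ofReal_le_ofReal hreal
  -- summability
  have hgsum : Summable g := by
    set η : ℝ := (β - α) / 2 with hηdef
    have hη : 0 < η := by rw [hηdef]; linarith
    set c₅ : ℝ := min c₁ 1 * C₃ with hc₅def
    have hc₅ : 0 < c₅ := by
      apply mul_pos (lt_min hc₁ one_pos) hC₃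
    have hev : ∀ᶠ (n : ℕ) in atTop, g n ≤ (((n : ℝ)) ^ (2 : ℝ))⁻¹ := by
      have htends : Tendsto (fun n : ℕ => ((n : ℝ)) ^ η) atTop atTop :=
        (tendsto_rpow_atTop hη).comp tendsto_natCast_atTop_atTop
      have h1 : ∀ᶠ n : ℕ in atTop, (2 / η) / c₅ ≤ ((n : ℝ)) ^ η :=
        htends.eventually_ge_atTop _
      have h2 : ∀ᶠ n : ℕ in atTop, (1 : ℝ) ≤ (n : ℝ) :=
        tendsto_natCast_atTop_atTop.eventually_ge_atTop _
      filter_upwards [h1, h2] with n hn1 hn2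
      have hx0 : (0 : ℝ) < (n : ℝ) := by linarith
      -- lower bound on the exponent
      have hN1 : C₃ * ((n : ℝ)) ^ (1 + β) ≤ ((N n : ℕ) : ℝ) + 1 := by
        have := Nat.le_ceil (C₃ * ((n : ℝ)) ^ (1 + β))
        simp only [hNdef]
        linarith
      have hβα : ((n : ℝ)) ^ (β - α) ≤ ((n : ℝ)) ^ (1 + β) :=
        Real.rpow_le_rpow_of_exponent_le hn2 (by linarith)
      have hkey : c₅ * ((n : ℝ)) ^ (β - α) ≤ r n * (((N n : ℕ) : ℝ) + 1) := by
        rcases min_cases (c₁ * ((n : ℝ)) ^ (-(1 + α))) 1 with ⟨heq, hle⟩ | ⟨heq, hlt⟩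
        · have hrn : r n = c₁ * ((n : ℝ)) ^ (-(1 + α)) := heq
          have hsplit : ((n : ℝ)) ^ (β - α) = ((n : ℝ)) ^ (-(1 + α)) * ((n : ℝ)) ^ (1 + β) := by
            rw [← Real.rpow_add hx0]
            congr 1
            ring
          have hprod : (c₁ * ((n : ℝ)) ^ (-(1 + α))) * (C₃ * ((n : ℝ)) ^ (1 + β)) =
              c₁ * C₃ * ((n : ℝ)) ^ (β - α) := by
            rw [hsplit]
            ring
          have h5 : c₅ * ((n : ℝ)) ^ (β - α) ≤ c₁ * C₃ * ((n : ℝ)) ^ (β - α) := by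
            apply mul_le_mul_of_nonneg_right _ (Real.rpow_nonneg hx0.le _)
            rw [hc₅def]
            exact mul_le_mul_of_nonneg_right (min_le_left _ _) hC₃.le
          rw [hrn]
          calc c₅ * ((n : ℝ)) ^ (β - α) ≤ c₁ * C₃ * ((n : ℝ)) ^ (β - α) := h5
            _ = (c₁ * ((n : ℝ)) ^ (-(1 + α))) * (C₃ * ((n : ℝ)) ^ (1 + β)) := hprod.symm
            _ ≤ (c₁ * ((n : ℝ)) ^ (-(1 + α))) * (((N n : ℕ) : ℝ) + 1) := by
                apply mul_le_mul_of_nonneg_left hN1 (by positivity)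
        · have hrn : r n = 1 := heq
          rw [hrn, one_mul]
          have h6 : c₅ * ((n : ℝ)) ^ (β - α) ≤ C₃ * ((n : ℝ)) ^ (β - α) := by
            apply mul_le_mul_of_nonneg_right _ (Real.rpow_nonneg hx0.le _)
            rw [hc₅def]
            exact le_trans (mul_le_mul_of_nonneg_right (min_le_right _ _) hC₃.le)
              (le_of_eq (one_mul _))
          calc c₅ * ((n : ℝ)) ^ (β - α) ≤ C₃ * ((n : ℝ)) ^ (β - α) := h6
            _ ≤ C₃ * ((n : ℝ)) ^ (1 + β) := mul_le_mul_of_nonneg_left hβα hC₃.le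
            _ ≤ ((N n : ℕ) : ℝ) + 1 := hN1
      have hlog : 2 * Real.log (n : ℝ) ≤ c₅ * ((n : ℝ)) ^ (β - α) := by
        have hl1 : Real.log (n : ℝ) ≤ ((n : ℝ)) ^ η / η :=
          Real.log_le_rpow_div hx0.le hη
        have hl2 : (2 / η) ≤ c₅ * ((n : ℝ)) ^ η := by
          rw [div_le_iff₀ hc₅] at hn1; linarith
        have hl3 : (2 / η) * ((n : ℝ)) ^ η ≤ c₅ * ((n : ℝ)) ^ η * ((n : ℝ)) ^ η :=
          mul_le_mul_of_nonneg_right hl2 (Real.rpow_nonneg hx0.le _)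
        have hl4 : ((n : ℝ)) ^ η * ((n : ℝ)) ^ η = ((n : ℝ)) ^ (β - α) := by
          rw [← Real.rpow_add hx0]; congr 1; rw [hηdef]; ring
        calc 2 * Real.log (n : ℝ) ≤ 2 * (((n : ℝ)) ^ η / η) := by
              apply mul_le_mul_of_nonneg_left hl1 (by norm_num)
          _ = (2 / η) * ((n : ℝ)) ^ η := by field_simp
          _ ≤ c₅ * ((n : ℝ)) ^ η * ((n : ℝ)) ^ η := hl3
          _ = c₅ * ((n : ℝ)) ^ (β - α) := by rw [mul_assoc, hl4]
      have hgexp : g n ≤ Real.exp (-(2 * Real.log (n : ℝ))) := by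
        apply Real.exp_le_exp.2
        apply neg_le_neg
        linarith [hkey]
      have hfin : Real.exp (-(2 * Real.log (n : ℝ))) = (((n : ℝ)) ^ (2 : ℝ))⁻¹ := by
        rw [← Real.rpow_neg hx0.le, Real.rpow_def_of_pos hx0]
        congr 1; ring
      rw [← hfin]; exact hgexp
    obtain ⟨n₀, hn₀⟩ := eventually_atTop.1 hev
    apply (summable_nat_add_iff (n₀ + 1)).1
    apply Summable.of_nonneg_of_le (fun n => (Real.exp_pos _).le)
      (fun n => hn₀ (n + (n₀ + 1)) (by omega))
    exact (summable_nat_add_iff (n₀ + 1)).2 (Real.summable_nat_rpow_inv.2 one_lt_two)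
  -- Borel-Cantelli
  have hBC : ∀ᵐ ω ∂μ, ∀ᶠ L in atTop, ω ∉ F L := by
    apply MeasureTheory.ae_eventually_notMem
    have h1 : ∑' L, μ (F L) ≤ ∑' L, ENNReal.ofReal (g L) := ENNReal.tsum_le_tsum hFg
    have h2 : ∑' L, ENNReal.ofReal (g L) = ENNReal.ofReal (∑' L, g L) :=
      (ENNReal.ofReal_tsum_of_nonneg (fun L => (Real.exp_pos _).le) hgsum).symm
    exact ne_top_of_le_ne_top (by rw [h2]; exact ENNReal.ofReal_ne_top) h1
  -- deterministic conclusion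
  filter_upwards [hBC] with ω hω
  obtain ⟨L₀, hL₀⟩ := eventually_atTop.1 hω
  set B : ℝ := (L₀ : ℝ) + 3 + max 1 C₃⁻¹ with hBdef
  have hB : 0 < B := by positivity
  have hev1 : ∀ᶠ ε in 𝓝[>] (0 : ℝ), δ ε / ε < 2 * M / B :=
    hδsmall (Iio_mem_nhds (by positivity))
  have hev3 : ∀ᶠ ε in 𝓝[>] (0 : ℝ), ε < c / (4 * M) := by
    have : Set.Ioo (0 : ℝ) (c / (4 * M)) ∈ 𝓝[>] (0 : ℝ) :=
      Ioo_mem_nhdsGT_of_mem ⟨le_refl _, by positivity⟩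
    filter_upwards [this] with ε hε using hε.2
  have hev4 : ∀ᶠ ε in 𝓝[>] (0 : ℝ), 0 < ε := self_mem_nhdsWithin
  have hcomb := (hev1.and (hlow.and (hev3.and hev4)))
  obtain ⟨ε₀, hε₀mem, hsub⟩ := mem_nhdsGT_iff_exists_Ioo_subset.1 hcomb
  refine ⟨ε₀, hε₀mem, fun ε hε hεlt => ?_⟩
  obtain ⟨hP1, hP2, hP3, -⟩ := hsub ⟨hε, hεlt⟩
  set d : ℝ := δ ε with hddef
  have hd : 0 < d := hδpos ε hε
  -- basic inequalities at scale ε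
  have h1 : d * B < 2 * M * ε := by
    rw [div_lt_div_iff₀ hε hB] at hP1; linarith
  have h2 : c₀ * ε ^ γ ≤ d := by
    rw [Real.rpow_neg hε.le, inv_mul_eq_div, le_div_iff₀ (Real.rpow_pos_of_pos hε γ)] at hP2
    linarith
  have h3 : 4 * M * ε ≤ c := by
    rw [lt_div_iff₀ (by positivity)] at hP3; linarith
  set A : ℝ := 2 * M * ε / d with hAdef
  have hA0 : 0 < A := by positivity
  have hBA : B ≤ A := by
    rw [le_div_iff₀ hd]; nlinarith
  have hB4 : (4 : ℝ) ≤ B := by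
    have h1' : (1 : ℝ) ≤ max 1 C₃⁻¹ := le_max_left _ _
    have h0' : (0 : ℝ) ≤ (L₀ : ℝ) := Nat.cast_nonneg _
    simp only [hBdef]; linarith
  set L : ℕ := ⌈A⌉₊ + 2 with hLdef
  have hLlow : A + 2 ≤ (L : ℝ) := by
    have := Nat.le_ceil A
    push_cast [hLdef]; linarith
  have hA4 : (4 : ℝ) ≤ A := le_trans hB4 hBA
  have hLup : (L : ℝ) ≤ 2 * A := by
    have h := Nat.ceil_lt_add_one hA0.le
    push_cast [hLdef]
    linarith
  have hL1 : (1 : ℝ) ≤ (L : ℝ) := by nlinarith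
  have hL₀L : L₀ ≤ L := by
    have : (L₀ : ℝ) ≤ (L : ℝ) := by
      have : (L₀ : ℝ) ≤ B := by
        have h1' : (1 : ℝ) ≤ max 1 C₃⁻¹ := le_max_left _ _
        simp only [hBdef]; linarith
      linarith [hBA, hLlow]
    exact_mod_cast this
  -- extract a bright lamp
  have hωL := hL₀ L hL₀L
  simp only [hFdef, Set.mem_iInter, Set.mem_preimage, Set.mem_Iio, not_forall, not_lt] at hωL
  obtain ⟨m, hmmem, hXL⟩ := hωL
  rw [Finset.mem_Icc] at hmmem
  obtain ⟨hm0, hmN⟩ := hmmem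
  -- position bound for the lamp
  have hC₃L : 1 ≤ C₃ * (L : ℝ) ^ (1 + β) := by
    have hLinv : C₃⁻¹ ≤ (L : ℝ) := le_trans (le_trans (le_max_right 1 C₃⁻¹) (by simp only [hBdef]; linarith [Nat.cast_nonneg (α := ℝ) L₀])) (le_trans hBA (by linarith))
    have hpow : (L : ℝ) ≤ (L : ℝ) ^ (1 + β) := by
      calc (L : ℝ) = (L : ℝ) ^ (1 : ℝ) := (Real.rpow_one _).symm
        _ ≤ (L : ℝ) ^ (1 + β) := Real.rpow_le_rpow_of_exponent_le hL1 (by linarith)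
    calc (1 : ℝ) = C₃ * C₃⁻¹ := by field_simp
      _ ≤ C₃ * (L : ℝ) ^ (1 + β) := by
          apply mul_le_mul_of_nonneg_left (le_trans hLinv hpow) hC₃.le
  have hmreal : (m : ℝ) ≤ 2 * (C₃ * (L : ℝ) ^ (1 + β)) := by
    have h1' : (m : ℝ) ≤ (N L : ℝ) := by exact_mod_cast hmN
    have h2' : ((N L : ℕ) : ℝ) < C₃ * (L : ℝ) ^ (1 + β) + 1 :=
      Nat.ceil_lt_add_one (by positivity)
    linarith
  have hmd : (m : ℝ) * d ≤ c / 2 := by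
    have hL1β : (0 : ℝ) ≤ 1 + β := by linarith
    have hLA : ((L : ℝ)) ^ (1 + β) ≤ (2 * A) ^ (1 + β) :=
      Real.rpow_le_rpow (by positivity) hLup hL1β
    have h2A : 2 * A = 4 * M * ε / d := by rw [hAdef]; ring
    have hAr : (2 * A) ^ (1 + β) = (4 * M) ^ (1 + β) * ε ^ (1 + β) / d ^ (1 + β) := by
      rw [h2A, Real.div_rpow (by positivity) hd.le, Real.mul_rpow (by positivity) hε.le]
    have hdβ : c₀ ^ β * ε ^ (1 + β) ≤ d ^ β := by
      have hh := Real.rpow_le_rpow (by positivity) h2 hβ0.le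
      calc c₀ ^ β * ε ^ (1 + β) = (c₀ * ε ^ γ) ^ β := by
            rw [Real.mul_rpow hc₀.le (Real.rpow_nonneg hε.le _), ← Real.rpow_mul hε.le,
              hγβ]
        _ ≤ d ^ β := hh
    have hfin : 2 * C₃ * (4 * M) ^ (1 + β) = c / 2 * c₀ ^ β := by
      have h4M : (0 : ℝ) < (4 * M) ^ (1 + β) := by positivity
      rw [hC₃def]; field_simp; ring
    have hstep1 : (m : ℝ) ≤ 2 * C₃ * (2 * A) ^ (1 + β) := by
      calc (m : ℝ) ≤ 2 * (C₃ * ((L : ℝ)) ^ (1 + β)) := hmreal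
        _ ≤ 2 * (C₃ * (2 * A) ^ (1 + β)) := by
            apply mul_le_mul_of_nonneg_left (mul_le_mul_of_nonneg_left hLA hC₃.le)
              (by norm_num)
        _ = 2 * C₃ * (2 * A) ^ (1 + β) := by ring
    have hstep2 : 2 * C₃ * (2 * A) ^ (1 + β) * d ≤ c / 2 := by
      rw [hAr]
      have hdpow : (0 : ℝ) < d ^ (1 + β) := by positivity
      rw [show 2 * C₃ * ((4 * M) ^ (1 + β) * ε ^ (1 + β) / d ^ (1 + β)) * d
          = 2 * C₃ * ((4 * M) ^ (1 + β) * ε ^ (1 + β)) * d / d ^ (1 + β) from by ring,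
        div_le_iff₀ hdpow]
      have hd1β : d ^ (1 + β) = d * d ^ β := by
        rw [Real.rpow_add hd, Real.rpow_one]
      rw [hd1β]
      have heq : 2 * C₃ * ((4 * M) ^ (1 + β) * ε ^ (1 + β)) * d =
          c / 2 * (c₀ ^ β * ε ^ (1 + β)) * d := by
        linear_combination (ε ^ (1 + β) * d) * hfin
      have h' : c / 2 * (c₀ ^ β * ε ^ (1 + β)) ≤ c / 2 * d ^ β :=
        mul_le_mul_of_nonneg_left hdβ (by positivity)
      calc 2 * C₃ * ((4 * M) ^ (1 + β) * ε ^ (1 + β)) * d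
          = c / 2 * (c₀ ^ β * ε ^ (1 + β)) * d := heq
        _ ≤ c / 2 * d ^ β * d := mul_le_mul_of_nonneg_right h' hd.le
        _ = c / 2 * (d * d ^ β) := by ring
    calc (m : ℝ) * d ≤ 2 * C₃ * (2 * A) ^ (1 + β) * d :=
        mul_le_mul_of_nonneg_right hstep1 hd.le
      _ ≤ c / 2 := hstep2
  -- the stripe location
  have hmd0 : (0 : ℝ) ≤ (m : ℝ) * d := mul_nonneg (by exact_mod_cast hm0) hd.le
  have hMε : (0 : ℝ) < M * ε := by positivity
  refine ⟨(m : ℝ) * d + M * ε, ?_, ?_, ?_⟩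
  · constructor
    · linarith
    · linarith
  · intro x hx
    obtain ⟨hx1, hx2⟩ := hx
    constructor
    · linarith
    · linarith
  · intro s hs
    obtain ⟨hs1, hs2⟩ := hs
    have hsl : (m : ℝ) * d ≤ s := by linarith
    have hsu : s ≤ (m : ℝ) * d + 2 * M * ε := by linarith
    have hk1 : (m : ℤ) ≤ ⌊d⁻¹ * s⌋ := by
      apply Int.le_floor.2
      push_cast
      rw [inv_mul_eq_div, le_div_iff₀ hd]
      linarith
    have hk2 : ⌊d⁻¹ * s⌋ ≤ m + (L : ℤ) - 2 := by
      have hr : d⁻¹ * s ≤ (m : ℝ) + A := by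
        rw [inv_mul_eq_div, div_le_iff₀ hd, hAdef]
        have : (m : ℝ) * d + (2 * M * ε / d) * d = (m : ℝ) * d + 2 * M * ε := by
          field_simp
        nlinarith [Int.floor_le (d⁻¹ * s)]
      have : ((⌊d⁻¹ * s⌋ : ℤ) : ℝ) ≤ ((m + (L : ℤ) - 2 : ℤ) : ℝ) := by
        push_cast
        have hfl := Int.floor_le (d⁻¹ * s)
        linarith [Nat.le_ceil A, hr, hfl]
      exact_mod_cast this
    have hIll : Illuminated X ⌊d⁻¹ * s⌋ ω := by
      refine ⟨m, ?_⟩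
      have habs : |m - ⌊d⁻¹ * s⌋| = ⌊d⁻¹ * s⌋ - m := by
        rw [abs_of_nonpos (by omega)]; ring
      rw [habs]; omega
    simp only [thetaStripe, ThetaSite, if_pos hIll]
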